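/- Let Ψ be the ℂ[x,t^{±1}]-endomorphism of ℂ[x,y,z,t^{±1},w] with Ψ(y) = -t⁻³(y+y²+wz) - (1/(4t⁶))(yz-xw)², Ψ(z) = z - (x/(2t³))(yz-xw), Ψ(w) = (1/(2t³))(yz-xw). Then Ψ(x²y+z²+x+t³) = (1 - xy·t⁻³)(xy+z²+x+t³). -/
import Mathlib


open MvPolynomial LaurentPolynomial

-- We work in ℂ[x,y,z,t^{±1},w] = (ℂ[t,t⁻¹])[x,y,z,w], with x = X 0, y = X 1,
-- z = X 2, w = X 3, and t = MvPolynomial.C (T 1).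

/-- The ℂ[x,t^{±1}]-algebra endomorphism Ψ. -/
noncomputable def PsiL :
    MvPolynomial (Fin 4) (LaurentPolynomial ℂ) →ₐ[LaurentPolynomial ℂ]
      MvPolynomial (Fin 4) (LaurentPolynomial ℂ) :=
  aeval ![X 0,
    -(MvPolynomial.C (T (-3))) * (X 1 + X 1 ^ 2 + X 3 * X 2) -
      MvPolynomial.C (LaurentPolynomial.C (1/4 : ℂ) * T (-6)) * (X 1 * X 2 - X 0 * X 3) ^ 2,
    X 2 - MvPolynomial.C (LaurentPolynomial.C (1/2 : ℂ) * T (-3)) * X 0 * (X 1 * X 2 - X 0 * X 3),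
    MvPolynomial.C (LaurentPolynomial.C (1/2 : ℂ) * T (-3)) * (X 1 * X 2 - X 0 * X 3)]

theorem stmt19 :
    PsiL (X 0 ^ 2 * X 1 + X 2 ^ 2 + X 0 + MvPolynomial.C (T 3)) =
      (1 - X 0 * X 1 * MvPolynomial.C (T (-3))) * (X 0 * X 1 + X 2 ^ 2 + X 0 + MvPolynomial.C (T 3)) := by
  have hF : (MvPolynomial.C (LaurentPolynomial.C (1/4 : ℂ)) :
      MvPolynomial (Fin 4) (LaurentPolynomial ℂ)) =
      (MvPolynomial.C (LaurentPolynomial.C (1/2 : ℂ)))^2 := by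
    rw [← map_pow, ← map_pow]
    norm_num
  have hG : (MvPolynomial.C (T (-6) : LaurentPolynomial ℂ) :
      MvPolynomial (Fin 4) (LaurentPolynomial ℂ)) = (MvPolynomial.C (T (-3)))^2 := by
    rw [← map_pow, show ((-6 : ℤ)) = -3 + -3 by norm_num, T_add, sq]
  have hH : (2 : MvPolynomial (Fin 4) (LaurentPolynomial ℂ)) *
      MvPolynomial.C (LaurentPolynomial.C (1/2 : ℂ)) = 1 := by
    rw [← map_ofNat (MvPolynomial.C :
        LaurentPolynomial ℂ →+* MvPolynomial (Fin 4) (LaurentPolynomial ℂ)) 2, ← map_mul,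
      ← map_ofNat (LaurentPolynomial.C : ℂ →+* LaurentPolynomial ℂ) 2, ← map_mul]
    norm_num
  have hAS : (MvPolynomial.C (T (-3) : LaurentPolynomial ℂ) :
      MvPolynomial (Fin 4) (LaurentPolynomial ℂ)) * MvPolynomial.C (T 3) = 1 := by
    rw [← map_mul, ← T_add]
    norm_num
  simp only [PsiL, map_add, map_sub, map_neg, map_mul, map_pow, map_one, aeval_X, aeval_C,
    algebraMap_eq, Matrix.cons_val_zero, Matrix.cons_val_one, Matrix.head_cons,
    Matrix.cons_val_two, Matrix.tail_cons, Matrix.cons_val_three, Matrix.cons_val_fin_one,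
    Fin.isValue]
  linear_combination
    (- X 0 ^ 2 * X 1 ^ 2 * X 2 ^ 2 * MvPolynomial.C (T (-6) : LaurentPolynomial ℂ) + 2 * X 0 ^ 3 * X 1 * X 2 * X 3 * MvPolynomial.C (T (-6) : LaurentPolynomial ℂ)
      - X 0 ^ 4 * X 3 ^ 2 * MvPolynomial.C (T (-6) : LaurentPolynomial ℂ)) * hF
    + (- X 0 ^ 2 * X 1 ^ 2 * X 2 ^ 2 * MvPolynomial.C (LaurentPolynomial.C (1/2 : ℂ)) ^ 2 + 2 * X 0 ^ 3 * X 1 * X 2 * X 3 * MvPolynomial.C (LaurentPolynomial.C (1/2 : ℂ)) ^ 2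
      - X 0 ^ 4 * X 3 ^ 2 * MvPolynomial.C (LaurentPolynomial.C (1/2 : ℂ)) ^ 2) * hG
    + (- X 0 * X 1 * X 2 ^ 2 * MvPolynomial.C (T (-3) : LaurentPolynomial ℂ) + X 0 ^ 2 * X 2 * X 3 * MvPolynomial.C (T (-3) : LaurentPolynomial ℂ)) * hH
    + (X 0 * X 1) * hAS
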